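/- Let n ≥ 3 and let w be an element of the affine symmetric group 𝑆̃_n. If w globally avoids the pattern 321 (no integers i < j < k with w(i) > w(j) > w(k)), then dis(w)/2 = ℓ(w). -/

import Mathlib

namespace Stmt14

/-- `w` is an element of the affine symmetric group `𝑆̃_n`: a bijection of `ℤ`
with `w(i + n) = w(i) + n` for all `i` and `∑_{i=1}^n (w(i) - i) = 0`. -/
def IsAffinePerm (n : ℕ) (w : Equiv.Perm ℤ) : Prop :=
  (∀ i : ℤ, w (i + (n : ℤ)) = w i + (n : ℤ)) ∧
    ∑ i ∈ Finset.Icc (1 : ℤ) (n : ℤ), (w i - i) = 0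

/-- `σ` is the Coxeter generator `sᵢ` of `𝑆̃_n`: it swaps `j` and `j + 1` for
every integer `j ≡ i (mod n)` and fixes all other integers. -/
def IsGenA (n : ℕ) (i : ℕ) (σ : Equiv.Perm ℤ) : Prop :=
  ∀ j : ℤ, (j ≡ (i : ℤ) [ZMOD (n : ℤ)] → σ j = j + 1 ∧ σ (j + 1) = j) ∧
    ((¬ j ≡ (i : ℤ) [ZMOD (n : ℤ)] ∧ ¬ j ≡ (i : ℤ) + 1 [ZMOD (n : ℤ)]) → σ j = j)

/-- `l` is a word for `w` in the letters `{0, …, n-1}`: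
`w = s_{i₁} ⋯ s_{i_ℓ}` where `l = [i₁, …, i_ℓ]`. -/
def IsWordA (n : ℕ) (w : Equiv.Perm ℤ) (l : List ℕ) : Prop :=
  (∀ i ∈ l, i < n) ∧
    ∃ σs : List (Equiv.Perm ℤ), List.Forall₂ (IsGenA n) l σs ∧ σs.prod = w

/-- The Coxeter length of `w`: the minimal length of a word for `w`. -/
noncomputable def lenA (n : ℕ) (w : Equiv.Perm ℤ) : ℕ :=
  sInf {m | ∃ l : List ℕ, IsWordA n w l ∧ l.length = m}

/-- The disarray `dis(w) = ∑_{i=1}^n |w(i) - i|`. -/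
noncomputable def disA (n : ℕ) (w : Equiv.Perm ℤ) : ℤ :=
  ∑ i ∈ Finset.Icc (1 : ℤ) (n : ℤ), |w i - i|

/-! ### Auxiliary material -/

variable {n i : ℕ} {σ u w : Equiv.Perm ℤ}

/-- The shift (periodicity) property. -/
def Shift (n : ℕ) (u : Equiv.Perm ℤ) : Prop := ∀ x : ℤ, u (x + (n : ℤ)) = u x + (n : ℤ)

lemma Shift.one : Shift n 1 := fun _ => rfl

lemma Shift.mul (hu : Shift n u) (hσ : Shift n σ) : Shift n (u * σ) := by
  intro x
  simp only [Equiv.Perm.mul_apply, hσ x, hu (σ x)]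

lemma Shift.zsmul (hu : Shift n u) (x : ℤ) : ∀ t : ℤ, u (x + t * (n : ℤ)) = u x + t * (n : ℤ) := by
  intro t
  induction t using Int.induction_on with
  | zero => simp
  | succ k ih =>
      have := hu (x + k * n)
      push_cast at *
      rw [show x + (k + 1) * n = (x + k*n) + n by ring, this, ih]; ring
  | pred k ih =>
      have := hu (x + (-k-1) * n)
      push_cast at *
      rw [show x + (-k-1) * n + n = x + (-k:ℤ) * n by ring] at this
      rw [show x + (-(k:ℤ) - 1) * n = x + (-k-1) * n by ring]
      have h2 : u (x + (-k-1) * n) = u (x + -(k:ℤ) * n) - n := by omega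
      rw [h2, ih]; ring

lemma IsGenA.apply_mem (h : IsGenA n i σ) (j : ℤ) (hj : j ≡ (i : ℤ) [ZMOD (n : ℤ)]) :
    σ j = j + 1 := ((h j).1 hj).1

lemma IsGenA.apply_mem' (h : IsGenA n i σ) (j : ℤ) (hj : j ≡ (i : ℤ) + 1 [ZMOD (n : ℤ)]) :
    σ j = j - 1 := by
  have h1 : j - 1 ≡ (i : ℤ) [ZMOD (n : ℤ)] := by
    have := Int.ModEq.sub_right 1 hj; simpa using this
  have := ((h (j-1)).1 h1).2
  simpa using this

lemma IsGenA.apply_fix (h : IsGenA n i σ) (j : ℤ)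
    (h1 : ¬ j ≡ (i : ℤ) [ZMOD (n : ℤ)]) (h2 : ¬ j ≡ (i : ℤ) + 1 [ZMOD (n : ℤ)]) :
    σ j = j := (h j).2 ⟨h1, h2⟩

lemma IsGenA.shift (h : IsGenA n i σ) : Shift n σ := by
  intro x
  have hx : x + (n:ℤ) ≡ x [ZMOD (n:ℤ)] := by
    have := Int.add_mul_emod_self_left (a := x) (b := (n:ℤ)) (c := 1)
    unfold Int.ModEq; simpa using this
  by_cases c1 : x ≡ (i : ℤ) [ZMOD (n : ℤ)]
  · rw [h.apply_mem x c1, h.apply_mem _ (hx.trans c1)]; ring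
  · by_cases c2 : x ≡ (i : ℤ) + 1 [ZMOD (n : ℤ)]
    · rw [h.apply_mem' x c2, h.apply_mem' _ (hx.trans c2)]; ring
    · rw [h.apply_fix x c1 c2, h.apply_fix _ (fun hh => c1 (hx.symm.trans hh)) (fun hh => c2 (hx.symm.trans hh))]

lemma IsGenA.sq (h : IsGenA n i σ) : σ * σ = 1 := by
  ext j
  simp only [Equiv.Perm.mul_apply, Equiv.Perm.one_apply]
  by_cases c1 : j ≡ (i : ℤ) [ZMOD (n : ℤ)]
  · rw [h.apply_mem j c1, ((h j).1 c1).2]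
  · by_cases c2 : j ≡ (i : ℤ) + 1 [ZMOD (n : ℤ)]
    · rw [h.apply_mem' j c2]
      have h1 : j - 1 ≡ (i : ℤ) [ZMOD (n : ℤ)] := by
        have := Int.ModEq.sub_right 1 c2; simpa using this
      have := ((h (j-1)).1 h1).1
      omega
    · rw [h.apply_fix j c1 c2, h.apply_fix j c1 c2]

lemma IsGenA.bounds (h : IsGenA n i σ) (j : ℤ) : j - 1 ≤ σ j ∧ σ j ≤ j + 1 := by
  by_cases c1 : j ≡ (i : ℤ) [ZMOD (n : ℤ)]
  · rw [h.apply_mem j c1]; omega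
  · by_cases c2 : j ≡ (i : ℤ) + 1 [ZMOD (n : ℤ)]
    · rw [h.apply_mem' j c2]; omega
    · rw [h.apply_fix j c1 c2]; omega

lemma IsGenA.eq_add_one (h : IsGenA n i σ) (j : ℤ) (hj : σ j = j + 1) :
    j ≡ (i : ℤ) [ZMOD (n : ℤ)] := by
  by_contra c1
  by_cases c2 : j ≡ (i : ℤ) + 1 [ZMOD (n : ℤ)]
  · rw [h.apply_mem' j c2] at hj; omega
  · rw [h.apply_fix j c1 c2] at hj; omega

/-! ### Window sums -/

lemma sum_window (g : ℤ → ℤ) (hg : ∀ j : ℤ, g (j + (n:ℤ)) = g j) (hn : 1 ≤ n) :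
    ∀ a : ℤ, ∑ x ∈ Finset.Icc (a + 1) (a + (n:ℤ)), g x = ∑ x ∈ Finset.Icc (1:ℤ) (n:ℤ), g x := by
  have hn' : (1:ℤ) ≤ (n:ℤ) := by exact_mod_cast hn
  have step : ∀ a : ℤ, ∑ x ∈ Finset.Icc (a + 2) (a + (n:ℤ) + 1), g x
      = ∑ x ∈ Finset.Icc (a + 1) (a + (n:ℤ)), g x := by
    intro a
    have e1 : Finset.Icc (a+2) (a + (n:ℤ) + 1) = insert (a + (n:ℤ) + 1) (Finset.Icc (a+2) (a+(n:ℤ))) := by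
      ext x; simp only [Finset.mem_Icc, Finset.mem_insert]; omega
    have e2 : Finset.Icc (a+1) (a + (n:ℤ)) = insert (a+1) (Finset.Icc (a+2) (a+(n:ℤ))) := by
      ext x; simp only [Finset.mem_Icc, Finset.mem_insert]; omega
    rw [e1, e2, Finset.sum_insert (by simp), Finset.sum_insert (by simp)]
    rw [show a + (n:ℤ) + 1 = (a+1) + (n:ℤ) by ring, hg (a+1)]
  intro a
  induction a using Int.induction_on with
  | zero => norm_num
  | succ k ih =>
      have := step k
      rw [show ((k:ℤ)+1) + 1 = (k:ℤ) + 2 by ring, show ((k:ℤ)+1) + (n:ℤ) = (k:ℤ) + (n:ℤ) + 1 by ring,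
        this, ih]
  | pred k ih =>
      have := step (-(k:ℤ) - 1)
      rw [show (-(k:ℤ)-1) + 2 = -(k:ℤ) + 1 by ring, show -(k:ℤ)-1 + (n:ℤ) + 1 = -(k:ℤ) + (n:ℤ) by ring] at this
      rw [← this, ih]

lemma sum_window' (g : ℤ → ℤ) (hg : ∀ j : ℤ, g (j + (n:ℤ)) = g j) (hn : 1 ≤ n) (r : ℤ) :
    ∑ x ∈ Finset.Icc r (r + (n:ℤ) - 1), g x = ∑ x ∈ Finset.Icc (1:ℤ) (n:ℤ), g x := by
  have := sum_window (n := n) g hg hn (r - 1)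
  rw [show r - 1 + 1 = r by ring, show r - 1 + (n:ℤ) = r + (n:ℤ) - 1 by ring] at this
  exact this

lemma not_dvd_small {n d : ℤ} (h1 : 0 < d) (h2 : d < n) : ¬ n ∣ d :=
  fun h => absurd (Int.le_of_dvd h1 h) (by omega)

lemma IsGenA.fix_between (hσ : IsGenA n i σ) {r j : ℤ} (hri : r ≡ (i:ℤ) [ZMOD (n:ℤ)])
    (h1 : r + 2 ≤ j) (h2 : j ≤ r + (n:ℤ) - 1) : σ j = j := by
  apply hσ.apply_fix
  · intro hc
    have : (n:ℤ) ∣ j - r := Int.ModEq.dvd (hri.trans hc.symm)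
    exact not_dvd_small (by omega) (by omega) this
  · intro hc
    have h3 : r + 1 ≡ (i:ℤ) + 1 [ZMOD (n:ℤ)] := Int.ModEq.add_right 1 hri
    have : (n:ℤ) ∣ j - (r+1) := Int.ModEq.dvd (h3.trans hc.symm)
    exact not_dvd_small (by omega) (by omega) this

lemma window_decomp (hn : 3 ≤ n) (r : ℤ) (g : ℤ → ℤ) :
    ∑ x ∈ Finset.Icc r (r + (n:ℤ) - 1), g x
      = g r + g (r+1) + ∑ x ∈ Finset.Icc (r+2) (r + (n:ℤ) - 1), g x := by
  have hn' : (3:ℤ) ≤ (n:ℤ) := by exact_mod_cast hn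
  have e1 : Finset.Icc r (r + (n:ℤ) - 1)
      = insert r (insert (r+1) (Finset.Icc (r+2) (r + (n:ℤ) - 1))) := by
    ext x; simp only [Finset.mem_Icc, Finset.mem_insert]; omega
  rw [e1, Finset.sum_insert (by simp only [Finset.mem_insert, Finset.mem_Icc]; omega),
    Finset.sum_insert (by simp only [Finset.mem_Icc]; omega)]
  ring

lemma pair_window (hn : 3 ≤ n) (hu : Shift n u) (hσ : IsGenA n i σ) {r : ℤ}
    (hri : r ≡ (i:ℤ) [ZMOD (n:ℤ)]) (F : ℤ → ℤ → ℤ)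
    (hF : ∀ x y, F (x + (n:ℤ)) (y + (n:ℤ)) = F x y) :
    (∑ x ∈ Finset.Icc (1:ℤ) (n:ℤ), F ((u * σ) x) x
        = F (u (r+1)) r + F (u r) (r+1) + ∑ x ∈ Finset.Icc (r+2) (r + (n:ℤ) - 1), F (u x) x)
    ∧ (∑ x ∈ Finset.Icc (1:ℤ) (n:ℤ), F (u x) x
        = F (u r) r + F (u (r+1)) (r+1) + ∑ x ∈ Finset.Icc (r+2) (r + (n:ℤ) - 1), F (u x) x) := by
  have hσs := hσ.shift
  have hr1 : σ r = r + 1 := hσ.apply_mem r hri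
  have hr2 : σ (r+1) = r := by
    have := hσ.apply_mem' (r+1) (Int.ModEq.add_right 1 hri)
    omega
  constructor
  · have hper : ∀ j : ℤ, F (u (σ (j + (n:ℤ)))) (j + (n:ℤ)) = F (u (σ j)) j := by
      intro j; rw [hσs j, hu (σ j), hF]
    calc ∑ x ∈ Finset.Icc (1:ℤ) (n:ℤ), F ((u * σ) x) x
        = ∑ x ∈ Finset.Icc r (r + (n:ℤ) - 1), F (u (σ x)) x := by
          rw [sum_window' (fun j => F (u (σ j)) j) hper (by omega) r]; rfl
      _ = F (u (σ r)) r + F (u (σ (r+1))) (r+1)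
            + ∑ x ∈ Finset.Icc (r+2) (r + (n:ℤ) - 1), F (u (σ x)) x :=
          window_decomp hn r _
      _ = F (u (r+1)) r + F (u r) (r+1) + ∑ x ∈ Finset.Icc (r+2) (r + (n:ℤ) - 1), F (u x) x := by
          rw [hr1, hr2]
          congr 1
          apply Finset.sum_congr rfl
          intro x hx
          simp only [Finset.mem_Icc] at hx
          rw [hσ.fix_between hri hx.1 hx.2]
  · have hper : ∀ j : ℤ, F (u (j + (n:ℤ))) (j + (n:ℤ)) = F (u j) j := by
      intro j; rw [hu j, hF]
    calc ∑ x ∈ Finset.Icc (1:ℤ) (n:ℤ), F (u x) x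
        = ∑ x ∈ Finset.Icc r (r + (n:ℤ) - 1), F (u x) x := by
          rw [sum_window' (fun j => F (u j) j) hper (by omega) r]
      _ = F (u r) r + F (u (r+1)) (r+1) + ∑ x ∈ Finset.Icc (r+2) (r + (n:ℤ) - 1), F (u x) x :=
          window_decomp hn r _

lemma absF : ∀ x y : ℤ, |(x + (n:ℤ)) - (y + (n:ℤ))| = |x - y| := by
  intro x y; congr 1; ring

lemma subF : ∀ x y : ℤ, (x + (n:ℤ)) - (y + (n:ℤ)) = x - y := by
  intro x y; ring

lemma dis_mul_gen_le (hn : 3 ≤ n) (hu : Shift n u) (hσ : IsGenA n i σ) :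
    disA n (u * σ) ≤ disA n u + 2 := by
  obtain ⟨h1, h2⟩ := pair_window hn hu hσ (Int.ModEq.refl (i:ℤ)) (fun x y => |x - y|) absF
  unfold disA
  rw [h1, h2]
  have b1 : |u ((i:ℤ)+1) - (i:ℤ)| ≤ |u ((i:ℤ)+1) - ((i:ℤ)+1)| + 1 := by
    have := abs_sub_le (u ((i:ℤ)+1)) ((i:ℤ)+1) (i:ℤ)
    simpa using this
  have b2 : |u (i:ℤ) - ((i:ℤ)+1)| ≤ |u (i:ℤ) - (i:ℤ)| + 1 := by
    have := abs_sub_le (u (i:ℤ)) (i:ℤ) ((i:ℤ)+1)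
    simpa using this
  omega

lemma dis_mul_gen_crossing (hn : 3 ≤ n) (hu : Shift n u) (hσ : IsGenA n i σ) {r : ℤ}
    (hri : r ≡ (i:ℤ) [ZMOD (n:ℤ)]) (ha : r + 1 ≤ u r) (hb : u (r+1) ≤ r) :
    disA n (u * σ) = disA n u - 2 := by
  obtain ⟨h1, h2⟩ := pair_window hn hu hσ hri (fun x y => |x - y|) absF
  unfold disA
  rw [h1, h2]
  rw [abs_of_nonpos (a := u (r+1) - r) (by omega), abs_of_nonneg (a := u r - (r+1)) (by omega),
    abs_of_nonneg (a := u r - r) (by omega), abs_of_nonpos (a := u (r+1) - (r+1)) (by omega)]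
  ring

lemma sum_sub_mul_gen (hn : 3 ≤ n) (hu : Shift n u) (hσ : IsGenA n i σ) {r : ℤ}
    (hri : r ≡ (i:ℤ) [ZMOD (n:ℤ)]) :
    ∑ x ∈ Finset.Icc (1:ℤ) (n:ℤ), ((u * σ) x - x) = ∑ x ∈ Finset.Icc (1:ℤ) (n:ℤ), (u x - x) := by
  obtain ⟨h1, h2⟩ := pair_window hn hu hσ hri (fun x y => x - y) subF
  rw [h1, h2]
  ring

lemma disA_nonneg : 0 ≤ disA n u :=
  Finset.sum_nonneg (fun _ _ => abs_nonneg _)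

lemma disA_one : disA n (1 : Equiv.Perm ℤ) = 0 := by
  unfold disA
  apply Finset.sum_eq_zero
  intro x _
  simp

/-! ### The lower bound: every word has length at least `disA/2` -/

lemma dis_word_le (hn : 3 ≤ n) :
    ∀ {l : List ℕ} {σs : List (Equiv.Perm ℤ)}, List.Forall₂ (IsGenA n) l σs →
      ∀ u : Equiv.Perm ℤ, Shift n u →
        disA n (u * σs.prod) ≤ disA n u + 2 * (σs.length : ℤ) := by
  intro l σs h
  induction h with
  | nil => intro u hu; simp
  | @cons a σ l' σs' hσ hrest IH =>
      intro u hu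
      rw [List.prod_cons, ← mul_assoc]
      have h1 := IH (u * σ) (hu.mul hσ.shift)
      have h2 := dis_mul_gen_le hn hu hσ
      simp only [List.length_cons]
      push_cast
      omega

lemma dis_le_of_word (hn : 3 ≤ n) {l : List ℕ} (hl : IsWordA n w l) :
    disA n w ≤ 2 * (l.length : ℤ) := by
  obtain ⟨-, σs, hf, hp⟩ := hl
  have := dis_word_le hn hf 1 Shift.one
  rw [one_mul, hp, disA_one] at this
  rw [hf.length_eq]
  omega

/-! ### base case -/

lemma eq_one_of_dis_zero (hn : 1 ≤ n) (hw : IsAffinePerm n w) (h0 : disA n w = 0) : w = 1 := by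
  have hall : ∀ x ∈ Finset.Icc (1:ℤ) (n:ℤ), |w x - x| = 0 :=
    (Finset.sum_eq_zero_iff_of_nonneg (fun x _ => abs_nonneg _)).mp h0
  have hfix : ∀ x, 1 ≤ x → x ≤ (n:ℤ) → w x = x := by
    intro x h1 h2
    have := hall x (Finset.mem_Icc.mpr ⟨h1, h2⟩)
    rw [abs_eq_zero] at this
    omega
  have hn0 : (0:ℤ) < (n:ℤ) := by exact_mod_cast (by omega : 0 < n)
  ext j
  show w j = j
  obtain ⟨x, t, hx1, hx2, rfl⟩ : ∃ x t : ℤ, 1 ≤ x ∧ x ≤ (n:ℤ) ∧ j = x + t * (n:ℤ) := by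
    have hmod1 := Int.emod_nonneg (j-1) (ne_of_gt hn0)
    have hmod2 := Int.emod_lt_of_pos (j-1) hn0
    have hdiv := Int.emod_add_mul_ediv (j-1) (n:ℤ)
    have hcomm : (n:ℤ) * ((j-1)/(n:ℤ)) = ((j-1)/(n:ℤ)) * (n:ℤ) := mul_comm _ _
    exact ⟨(j-1) % (n:ℤ) + 1, (j-1) / (n:ℤ), by omega, by omega, by omega⟩
  rw [Shift.zsmul hw.1 x t, hfix x hx1 hx2]

/-! ### finding a crossing descent -/

lemma sum_distinct_ge : ∀ (c : ℕ) (S : Finset ℤ) (a : ℤ), S.card = c → (∀ x ∈ S, a ≤ x) →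
    ∑ x ∈ Finset.Icc a (a + (c:ℤ) - 1), x ≤ ∑ x ∈ S, x := by
  intro c
  induction c with
  | zero =>
      intro S a hc _
      simp only [Nat.cast_zero]
      rw [Finset.card_eq_zero] at hc
      subst hc
      rw [show a + 0 - 1 = a - 1 by ring, Finset.Icc_eq_empty (by omega)]
  | succ c ih =>
      intro S a hc ha
      have hne : S.Nonempty := by
        rw [← Finset.card_pos, hc]; omega
      set M := S.max' hne with hM
      have hMS : M ∈ S := S.max'_mem hne
      have hsub : S ⊆ Finset.Icc a M := by
        intro x hx
        simp only [Finset.mem_Icc]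
        exact ⟨ha x hx, S.le_max' x hx⟩
      have hcard : S.card ≤ (M + 1 - a).toNat := by
        have := Finset.card_le_card hsub
        rwa [Int.card_Icc] at this
      have hMa : a + (c:ℤ) ≤ M := by
        rw [hc] at hcard
        omega
      have herase : (S.erase M).card = c := by
        rw [Finset.card_erase_of_mem hMS, hc]; rfl
      have hsum : ∑ x ∈ S, x = M + ∑ x ∈ S.erase M, x := (Finset.add_sum_erase S id hMS).symm
      have hIH := ih (S.erase M) a herase (fun x hx => ha x (Finset.mem_of_mem_erase hx))
      have hdec : Finset.Icc a (a + ((c:ℤ)+1) - 1) = insert (a + (c:ℤ)) (Finset.Icc a (a + (c:ℤ) - 1)) := by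
        ext x; simp only [Finset.mem_Icc, Finset.mem_insert]; omega
      push_cast
      rw [show a + ((c:ℤ) + 1) - 1 = a + ((c:ℤ)+1) - 1 by ring, hdec,
        Finset.sum_insert (by simp only [Finset.mem_Icc]; omega), hsum]
      omega

lemma exists_up (hw : IsAffinePerm n w) (hd : 0 < disA n w) :
    ∃ p : ℤ, p ∈ Finset.Icc (1:ℤ) (n:ℤ) ∧ p < w p := by
  by_contra hc
  push_neg at hc
  have : disA n w = - ∑ x ∈ Finset.Icc (1:ℤ) (n:ℤ), (w x - x) := by
    unfold disA
    rw [← Finset.sum_neg_distrib]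
    apply Finset.sum_congr rfl
    intro x hx
    have := hc x hx
    rw [abs_of_nonpos (by omega)]
  rw [hw.2] at this
  omega

lemma exists_down (hn : 3 ≤ n) (hw : IsAffinePerm n w) {p : ℤ} (hp : p < w p) :
    ∃ q : ℤ, p < q ∧ w q ≤ p := by
  by_contra hc
  push_neg at hc
  have hper : ∀ j : ℤ, (w (j + (n:ℤ)) - (j + (n:ℤ))) = w j - j := by
    intro j; rw [hw.1 j]; ring
  have hzero : ∑ x ∈ Finset.Icc p (p + (n:ℤ) - 1), (w x - x) = 0 := by
    rw [sum_window' (fun j => w j - j) hper (by omega) p, hw.2]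
  have hsum : ∑ x ∈ Finset.Icc p (p + (n:ℤ) - 1), w x = ∑ x ∈ Finset.Icc p (p + (n:ℤ) - 1), x := by
    have := Finset.sum_sub_distrib (s := Finset.Icc p (p + (n:ℤ) - 1)) (f := fun x => w x) (g := fun x => x)
    omega
  set S := (Finset.Icc p (p + (n:ℤ) - 1)).image w with hS
  have hinj : Set.InjOn w (Finset.Icc p (p + (n:ℤ) - 1)) := w.injective.injOn
  have hcard : S.card = n := by
    rw [hS, Finset.card_image_of_injOn hinj, Int.card_Icc]
    omega
  have hge : ∀ x ∈ S, p + 1 ≤ x := by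
    intro x hx
    rw [hS, Finset.mem_image] at hx
    obtain ⟨j, hj, rfl⟩ := hx
    simp only [Finset.mem_Icc] at hj
    rcases eq_or_lt_of_le hj.1 with h | h
    · subst h; omega
    · have := hc j h; omega
  have hbig := sum_distinct_ge n S (p+1) hcard hge
  have hsum2 : ∑ x ∈ S, x = ∑ x ∈ Finset.Icc p (p + (n:ℤ) - 1), w x := Finset.sum_image (by
    intro a _ b _ hab
    exact w.injective hab)
  have hshift : ∑ x ∈ Finset.Icc (p+1) (p+1 + (n:ℤ) - 1), x
      = ∑ x ∈ Finset.Icc p (p + (n:ℤ) - 1), x + n := by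
    have hmap := Finset.map_add_left_Icc p (p + (n:ℤ) - 1) (1:ℤ)
    calc ∑ x ∈ Finset.Icc (p+1) (p+1 + (n:ℤ) - 1), x
        = ∑ x ∈ Finset.map (addLeftEmbedding (1:ℤ)) (Finset.Icc p (p + (n:ℤ) - 1)), x := by
          rw [hmap]; congr 1 <;> ring
      _ = ∑ x ∈ Finset.Icc p (p + (n:ℤ) - 1), (1 + x) := Finset.sum_map _ _ _
      _ = ∑ x ∈ Finset.Icc p (p + (n:ℤ) - 1), x + n := by
          rw [Finset.sum_add_distrib, Finset.sum_const, Int.card_Icc]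
          have h3 : (3:ℤ) ≤ (n:ℤ) := by exact_mod_cast hn
          have h4 : ((p + (n:ℤ) - 1) + 1 - p).toNat = n := by omega
          rw [h4]
          ring
  rw [hshift, hsum2, hsum] at hbig
  have h3 : (3:ℤ) ≤ (n:ℤ) := by exact_mod_cast hn
  omega

lemma exists_crossing (hn : 3 ≤ n) (hw : IsAffinePerm n w)
    (hav : ¬ ∃ i j k : ℤ, i < j ∧ j < k ∧ w i > w j ∧ w j > w k)
    (hd : 0 < disA n w) :
    ∃ r : ℤ, r + 1 ≤ w r ∧ w (r + 1) ≤ r := by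
  obtain ⟨p, -, hp⟩ := exists_up hw hd
  obtain ⟨q, hpq, hq⟩ := exists_down hn hw hp
  set T := (Finset.Icc p (q-1)).filter (fun j => j + 1 ≤ w j) with hT
  have hpT : p ∈ T := by
    rw [hT, Finset.mem_filter, Finset.mem_Icc]
    exact ⟨⟨le_refl _, by omega⟩, by omega⟩
  have hTne : T.Nonempty := ⟨p, hpT⟩
  set r := T.max' hTne with hr
  have hrT : r ∈ T := T.max'_mem hTne
  rw [hT, Finset.mem_filter, Finset.mem_Icc] at hrT
  obtain ⟨⟨hpr, hrq⟩, hwr⟩ := hrT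
  refine ⟨r, hwr, ?_⟩
  by_contra hcon
  push_neg at hcon
  rcases eq_or_lt_of_le (show r + 1 ≤ q by omega) with heq | hlt
  · rw [← heq] at hq
    omega
  · have hnotT : ¬ (r+1 ∈ T) := by
      intro hmem
      have := T.le_max' (r+1) hmem
      rw [← hr] at this
      omega
    have hle : w (r+1) ≤ r + 1 := by
      by_contra hgt
      apply hnotT
      rw [hT, Finset.mem_filter, Finset.mem_Icc]
      exact ⟨⟨by omega, by omega⟩, by omega⟩
    have heq1 : w (r+1) = r + 1 := by omega
    apply hav
    refine ⟨r, r+1, q, by omega, hlt, ?_, ?_⟩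
    · have : w r ≠ r + 1 := by
        intro h
        exact (by omega : r ≠ r + 1) (w.injective (by rw [h, heq1]))
      omega
    · omega

/-! ### avoidance is preserved -/

lemma avoid_mul_gen (hsh : Shift n w) (hσ : IsGenA n i σ)
    {r : ℤ} (hri : r ≡ (i:ℤ) [ZMOD (n:ℤ)]) (hdesc : w (r+1) < w r)
    (hav : ¬ ∃ i j k : ℤ, i < j ∧ j < k ∧ w i > w j ∧ w j > w k) :
    ¬ ∃ a b c : ℤ, a < b ∧ b < c ∧ (w * σ) a > (w * σ) b ∧ (w * σ) b > (w * σ) c := by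
  have hdesc' : ∀ x : ℤ, x ≡ (i:ℤ) [ZMOD (n:ℤ)] → w (x+1) < w x := by
    intro x hx
    obtain ⟨t, ht⟩ : ∃ t : ℤ, x - r = t * (n:ℤ) := by
      obtain ⟨t, ht⟩ := Int.modEq_iff_dvd.mp (hri.trans hx.symm)
      exact ⟨t, by rw [mul_comm]; exact ht⟩
    have h1 : w x = w r + t * (n:ℤ) := by
      rw [show x = r + t * (n:ℤ) by omega]
      exact Shift.zsmul hsh r t
    have h2 : w (x+1) = w (r+1) + t * (n:ℤ) := by
      rw [show x + 1 = (r+1) + t * (n:ℤ) by omega]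
      exact Shift.zsmul hsh (r+1) t
    omega
  have key : ∀ a b : ℤ, a < b → (w * σ) a > (w * σ) b → σ a < σ b := by
    intro a b hab hwab
    by_contra hc
    push_neg at hc
    have hne : σ a ≠ σ b := fun h => (by omega : a ≠ b) (σ.injective h)
    have hba : σ b < σ a := lt_of_le_of_ne hc hne.symm
    obtain ⟨ba1, ba2⟩ := hσ.bounds a
    obtain ⟨bb1, bb2⟩ := hσ.bounds b
    have hsa : σ a = a + 1 := by
      by_contra h
      have h1 : σ a ≤ a := by omega
      omega
    have hsb : σ b = a := by omega
    have hacong := hσ.eq_add_one a hsa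
    have := hdesc' a hacong
    simp only [Equiv.Perm.mul_apply] at hwab
    rw [hsa, hsb] at hwab
    omega
  rintro ⟨a, b, c, hab, hbc, h1, h2⟩
  have k1 := key a b hab h1
  have k2 := key b c hbc h2
  simp only [Equiv.Perm.mul_apply] at h1 h2
  exact hav ⟨σ a, σ b, σ c, k1, k2, h1, h2⟩

/-! ### existence of generators -/

open scoped Classical in
noncomputable def genFun (n i : ℕ) (j : ℤ) : ℤ :=
  if j ≡ (i:ℤ) [ZMOD (n:ℤ)] then j + 1 else if j ≡ (i:ℤ) + 1 [ZMOD (n:ℤ)] then j - 1 else j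

lemma genFun_inv (hn : 2 ≤ n) (i : ℕ) : Function.Involutive (genFun n i) := by
  have hne : ¬ ((i:ℤ) ≡ (i:ℤ) + 1 [ZMOD (n:ℤ)]) := by
    intro h
    have : (n:ℤ) ∣ 1 := by simpa using Int.ModEq.dvd h
    have := Int.le_of_dvd one_pos this
    omega
  intro j
  unfold genFun
  by_cases c1 : j ≡ (i:ℤ) [ZMOD (n:ℤ)]
  · rw [if_pos c1]
    have d1 : ¬ (j + 1 ≡ (i:ℤ) [ZMOD (n:ℤ)]) := by
      intro h
      exact hne (((Int.ModEq.add_right 1 c1).symm.trans h).symm)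
    have d2 : j + 1 ≡ (i:ℤ) + 1 [ZMOD (n:ℤ)] := Int.ModEq.add_right 1 c1
    rw [if_neg d1, if_pos d2]
    ring
  · by_cases c2 : j ≡ (i:ℤ) + 1 [ZMOD (n:ℤ)]
    · rw [if_neg c1, if_pos c2]
      have d1 : j - 1 ≡ (i:ℤ) [ZMOD (n:ℤ)] := by
        have := Int.ModEq.sub_right 1 c2; simpa using this
      rw [if_pos d1]
      ring
    · rw [if_neg c1, if_neg c2, if_neg c1, if_neg c2]

lemma exists_gen (hn : 2 ≤ n) (i : ℕ) : ∃ σ : Equiv.Perm ℤ, IsGenA n i σ := by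
  refine ⟨(genFun_inv hn i).toPerm, ?_⟩
  intro j
  constructor
  · intro hj
    constructor
    · show genFun n i j = j + 1
      unfold genFun; rw [if_pos hj]
    · show genFun n i (j+1) = j
      have hne : ¬ ((i:ℤ) ≡ (i:ℤ) + 1 [ZMOD (n:ℤ)]) := by
        intro h
        have : (n:ℤ) ∣ 1 := by simpa using Int.ModEq.dvd h
        have := Int.le_of_dvd one_pos this
        omega
      have d1 : ¬ (j + 1 ≡ (i:ℤ) [ZMOD (n:ℤ)]) := by
        intro h
        exact hne ((Int.ModEq.add_right 1 hj).symm.trans h).symm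
      have d2 : j + 1 ≡ (i:ℤ) + 1 [ZMOD (n:ℤ)] := Int.ModEq.add_right 1 hj
      unfold genFun; rw [if_neg d1, if_pos d2]; ring
  · rintro ⟨h1, h2⟩
    show genFun n i j = j
    unfold genFun; rw [if_neg h1, if_neg h2]

/-! ### main induction -/

lemma exists_word_main (hn : 3 ≤ n) :
    ∀ d : ℕ, ∀ w : Equiv.Perm ℤ, IsAffinePerm n w →
      (¬ ∃ i j k : ℤ, i < j ∧ j < k ∧ w i > w j ∧ w j > w k) →
      (disA n w).toNat = d →
      ∃ l : List ℕ, IsWordA n w l ∧ disA n w = 2 * (l.length : ℤ) := by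
  intro d
  induction d using Nat.strong_induction_on with
  | _ d IH =>
    intro w hw hav hd
    rcases eq_or_lt_of_le (disA_nonneg (n := n) (u := w)) with h0 | hpos
    · have hw1 : w = 1 := eq_one_of_dis_zero (by omega) hw h0.symm
      refine ⟨[], ⟨by simp, [], List.Forall₂.nil, by simp [hw1]⟩, by simp [← h0]⟩
    · obtain ⟨r, hr1, hr2⟩ := exists_crossing hn hw hav hpos
      set i : ℕ := (r % (n:ℤ)).toNat with hi
      have hn0 : (0:ℤ) < (n:ℤ) := by exact_mod_cast (by omega : 0 < n)
      have hmod1 := Int.emod_nonneg r (ne_of_gt hn0)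
      have hmod2 := Int.emod_lt_of_pos r hn0
      have hicast : ((i : ℕ) : ℤ) = r % (n:ℤ) := Int.toNat_of_nonneg hmod1
      have hilt : i < n := by
        have h1 : ((i : ℕ) : ℤ) < (n : ℤ) := by rw [hicast]; exact hmod2
        exact_mod_cast h1
      have hri : r ≡ (i:ℤ) [ZMOD (n:ℤ)] := by
        rw [hicast]
        show r % (n:ℤ) = (r % (n:ℤ)) % (n:ℤ)
        rw [Int.emod_emod_of_dvd _ dvd_rfl]
      obtain ⟨σ, hσ⟩ := exists_gen (n := n) (by omega) i
      have hsh' : Shift n (w * σ) := Shift.mul hw.1 hσ.shift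
      have haff' : IsAffinePerm n (w * σ) :=
        ⟨hsh', (sum_sub_mul_gen hn hw.1 hσ hri).trans hw.2⟩
      have hav' := avoid_mul_gen (r := r) hw.1 hσ hri (show w (r+1) < w r by omega) hav
      have hdis' : disA n (w * σ) = disA n w - 2 := dis_mul_gen_crossing hn hw.1 hσ hri hr1 hr2
      have hnn' : 0 ≤ disA n (w * σ) := disA_nonneg
      have hlt : (disA n (w * σ)).toNat < d := by omega
      obtain ⟨l', hword', hlen'⟩ := IH _ hlt (w * σ) haff' hav' rfl
      obtain ⟨hlets, σs', hf', hp'⟩ := hword'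
      refine ⟨l' ++ [i], ⟨?_, σs' ++ [σ], ?_, ?_⟩, ?_⟩
      · intro x hx
        rcases List.mem_append.mp hx with h | h
        · exact hlets x h
        · have : x = i := by simpa using h
          omega
      · exact List.rel_append hf' (List.forall₂_cons.mpr ⟨hσ, List.Forall₂.nil⟩)
      · rw [List.prod_append, List.prod_cons, List.prod_nil, mul_one, hp', mul_assoc, hσ.sq,
          mul_one]
      · simp only [List.length_append, List.length_singleton]
        push_cast
        omega

/-! ### main theorem -/

theorem stmt_14 (n : ℕ) (hn : 3 ≤ n) (w : Equiv.Perm ℤ) (hw : IsAffinePerm n w)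
    (havoid : ¬ ∃ i j k : ℤ, i < j ∧ j < k ∧ w i > w j ∧ w j > w k) :
    disA n w = 2 * (lenA n w : ℤ) := by
  obtain ⟨l₀, hl₀, hdis⟩ := exists_word_main hn (disA n w).toNat w hw havoid rfl
  have hne : {m | ∃ l : List ℕ, IsWordA n w l ∧ l.length = m}.Nonempty :=
    ⟨l₀.length, l₀, hl₀, rfl⟩
  have hmem : lenA n w ∈ {m | ∃ l : List ℕ, IsWordA n w l ∧ l.length = m} :=
    Nat.sInf_mem hne
  obtain ⟨l₁, hl₁, hlen₁⟩ := hmem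
  have hle : lenA n w ≤ l₀.length := Nat.sInf_le ⟨l₀, hl₀, rfl⟩
  have hlb : disA n w ≤ 2 * (l₁.length : ℤ) := dis_le_of_word hn hl₁
  have hcast : (lenA n w : ℤ) ≤ (l₀.length : ℤ) := by exact_mod_cast hle
  rw [hlen₁] at hlb
  omega

end Stmt14
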